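/- Let ρ be a positive definite density operator on a finite-dimensional Hilbert space H and let D_ρ be the commutation super operator defined by D_ρ(X)ρ + ρD_ρ(X) = i(Xρ - ρX). Then for every β ∈ [0,1], the super operator I + iβ·D_ρ on B(H) is invertible. -/

import Mathlib

open Matrix
open scoped ComplexOrder
noncomputable section

private lemma diag_entry_eq {n : ℕ} (ρ Z : Matrix (Fin n) (Fin n) ℂ) (j : Fin n) :
    (Zᴴ * ρ * Z) j j = star (fun k => Z k j) ⬝ᵥ ρ *ᵥ (fun k => Z k j) := by
  simp [Matrix.mul_apply, dotProduct, Matrix.mulVec, Matrix.conjTranspose_apply,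
    Finset.mul_sum, Finset.sum_mul, mul_assoc]
  rw [Finset.sum_comm]

private lemma trace_sandwich_nonneg {n : ℕ} {ρ : Matrix (Fin n) (Fin n) ℂ}
    (hρ : ρ.PosSemidef) (Z : Matrix (Fin n) (Fin n) ℂ) :
    0 ≤ (Zᴴ * ρ * Z).trace := by
  rw [Matrix.trace]
  apply Finset.sum_nonneg
  intro j _
  rw [Matrix.diag_apply, diag_entry_eq]
  exact hρ.dotProduct_mulVec_nonneg _

private lemma trace_sandwich_eq_zero {n : ℕ} {ρ : Matrix (Fin n) (Fin n) ℂ}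
    (hρ : ρ.PosDef) (Z : Matrix (Fin n) (Fin n) ℂ)
    (h : (Zᴴ * ρ * Z).trace = 0) : Z = 0 := by
  rw [Matrix.trace] at h
  have hz := (Finset.sum_eq_zero_iff_of_nonneg (fun j _ => by
    rw [Matrix.diag_apply, diag_entry_eq]; exact hρ.posSemidef.dotProduct_mulVec_nonneg _)).mp h
  ext k j
  by_contra hkj
  have hcol : (fun k => Z k j) ≠ 0 := by
    intro h0
    exact hkj (by simpa using congrFun h0 k)
  have := hρ.dotProduct_mulVec_pos hcol
  have h0 := hz j (Finset.mem_univ j)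
  rw [Matrix.diag_apply, diag_entry_eq] at h0
  rw [h0] at this
  exact lt_irrefl _ this

theorem id_add_smul_commutationOperator_bijective {n : ℕ}
    (ρ : Matrix (Fin n) (Fin n) ℂ) (hρ : ρ.PosDef) (htr : Matrix.trace ρ = 1)
    (D : Matrix (Fin n) (Fin n) ℂ →ₗ[ℂ] Matrix (Fin n) (Fin n) ℂ)
    (hD : ∀ X, D X * ρ + ρ * D X = Complex.I • (X * ρ - ρ * X))
    (β : ℝ) (hβ : β ∈ Set.Icc (0 : ℝ) 1) :
    Function.Bijective (fun X : Matrix (Fin n) (Fin n) ℂ =>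
      X + ((β : ℂ) * Complex.I) • D X) := by
  obtain ⟨hβ0, hβ1⟩ := hβ
  set g : Matrix (Fin n) (Fin n) ℂ →ₗ[ℂ] Matrix (Fin n) (Fin n) ℂ :=
    LinearMap.id + ((β : ℂ) * Complex.I) • D with hg
  have hfun : (fun X : Matrix (Fin n) (Fin n) ℂ => X + ((β : ℂ) * Complex.I) • D X) = ⇑g := by
    funext X; simp [hg]
  rw [hfun]
  have hinj : Function.Injective ⇑g := by
    rw [injective_iff_map_eq_zero]
    intro X hX
    set Y := D X with hY
    have hXeq : X = -((((β : ℂ) * Complex.I)) • Y) := by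
      have h : X + ((β : ℂ) * Complex.I) • Y = 0 := hX
      exact eq_neg_of_add_eq_zero_left h
    -- key identity: (1-β)•(Y*ρ) + (1+β)•(ρ*Y) = 0
    have h2 : Y * ρ + ρ * Y = (β : ℂ) • (Y * ρ) - (β : ℂ) • (ρ * Y) := by
      have h := hD X
      rw [← hY, hXeq] at h
      rw [h, neg_mul, mul_neg, smul_mul_assoc, mul_smul_comm, sub_neg_eq_add, smul_add,
        smul_neg, smul_smul, smul_smul]
      have hc : Complex.I * ((β : ℂ) * Complex.I) = -(β : ℂ) := by
        rw [mul_comm, mul_assoc, Complex.I_mul_I]; ring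
      rw [hc, neg_smul, neg_smul, neg_neg]
      abel
    have h1 : ((1 : ℂ) - β) • (Y * ρ) + ((1 : ℂ) + β) • (ρ * Y) = 0 := by
      rw [sub_smul, add_smul, one_smul, one_smul]
      have : Y * ρ - (β : ℂ) • (Y * ρ) + (ρ * Y + (β : ℂ) • (ρ * Y))
          = (Y * ρ + ρ * Y) - ((β : ℂ) • (Y * ρ) - (β : ℂ) • (ρ * Y)) := by abel
      rw [this, h2, sub_self]
    -- multiply by Yᴴ on the left and take traces
    have h3 : ((1 : ℂ) - β) * (Yᴴ * Y * ρ).trace + ((1 : ℂ) + β) * (Yᴴ * ρ * Y).trace = 0 := by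
      have := congrArg (fun M => (Yᴴ * M).trace) h1
      simpa [Matrix.mul_add, Matrix.mul_smul, Matrix.trace_add, Matrix.trace_smul,
        smul_eq_mul, mul_assoc] using this
    have ht1 : 0 ≤ (Yᴴ * Y * ρ).trace := by
      have := trace_sandwich_nonneg hρ.posSemidef Yᴴ
      rwa [Matrix.conjTranspose_conjTranspose, Matrix.trace_mul_cycle] at this
    have ht2 : 0 ≤ (Yᴴ * ρ * Y).trace := trace_sandwich_nonneg hρ.posSemidef Y
    have hc1 : 0 ≤ ((1 : ℂ) - β) := by
      rw [show ((1 : ℂ) - β) = ((1 - β : ℝ) : ℂ) by push_cast; ring, Complex.zero_le_real]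
      linarith
    have hc2 : 0 < ((1 : ℂ) + β) := by
      rw [show ((1 : ℂ) + β) = ((1 + β : ℝ) : ℂ) by push_cast; ring, Complex.zero_lt_real]
      linarith
    have hterm1 : 0 ≤ ((1 : ℂ) - β) * (Yᴴ * Y * ρ).trace := mul_nonneg hc1 ht1
    have hterm2 : 0 ≤ ((1 : ℂ) + β) * (Yᴴ * ρ * Y).trace := mul_nonneg hc2.le ht2
    have ht2z : (Yᴴ * ρ * Y).trace = 0 := by
      have h4 : ((1 : ℂ) + β) * (Yᴴ * ρ * Y).trace = 0 := le_antisymm (by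
        have : ((1 : ℂ) + β) * (Yᴴ * ρ * Y).trace = -(((1 : ℂ) - β) * (Yᴴ * Y * ρ).trace) := by
          linear_combination h3
        rw [this]; simpa using hterm1) hterm2
      exact (mul_eq_zero.mp h4).resolve_left (by exact_mod_cast hc2.ne')
    have hYz : Y = 0 := trace_sandwich_eq_zero hρ Y ht2z
    rw [hXeq, hYz, smul_zero, neg_zero]
  exact ⟨hinj, LinearMap.injective_iff_surjective.mp hinj⟩
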